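/- There exists a constant C > 0 (depending only on T, not on n) such that for every integer n ≥ 2, all x, y ∈ [0,π], and every t ∈ (0,T], ∫_0^t ∫_0^π |G^n_{t−r}(x,z) − G^n_{t−r}(y,z)|² dz dr ≤ C|x−y|². -/

import Mathlib

set_option maxHeartbeats 1000000
open Real MeasureTheory intervalIntegral Finset



/-- `φ_j(x) = √(2/π)·sin(jx)`. -/
noncomputable def phi (j : ℕ) (x : ℝ) : ℝ := Real.sqrt (2 / Real.pi) * Real.sin (j * x)

/-- `λ_{j,n} = −j²·c_{j,n}` with `c_{j,n} = sin²(jπ/(2n))/(jπ/(2n))²`. -/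
noncomputable def lam (n j : ℕ) : ℝ :=
  -((j : ℝ) ^ 2) * (Real.sin ((j : ℝ) * Real.pi / (2 * n)) ^ 2
    / ((j : ℝ) * Real.pi / (2 * n)) ^ 2)

/-- `κ_n(y) = h⌊y/h⌋` with `h = π/n`. -/
noncomputable def kappa (n : ℕ) (y : ℝ) : ℝ :=
  (Real.pi / n) * (⌊y / (Real.pi / n)⌋ : ℝ)

/-- Piecewise linear interpolant of `φ_j` on the grid `{kπ/n}`. -/
noncomputable def phiI (n j : ℕ) (x : ℝ) : ℝ :=
  phi j (kappa n x) + ((n : ℝ) * x / Real.pi - (⌊x / (Real.pi / n)⌋ : ℝ))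
    * (phi j (kappa n x + Real.pi / n) - phi j (kappa n x))

/-- Discrete Green function `G^n_t(x,y) = Σ_{j=1}^{n−1} e^{−λ_{j,n}²t} φ_{j,n}(x) φ_j(κ_n(y))`. -/
noncomputable def Gn (n : ℕ) (t x y : ℝ) : ℝ :=
  ∑ j ∈ Finset.Icc 1 (n - 1),
    Real.exp (-(lam n j) ^ 2 * t) * phiI n j x * phi j (kappa n y)


lemma floor_cell {n : ℕ} (hn : 0 < n) {m : ℤ} {u : ℝ}
    (h1 : (m : ℝ) * (Real.pi / n) ≤ u) (h2 : u < (m + 1 : ℝ) * (Real.pi / n)) :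
    ⌊u / (Real.pi / n)⌋ = m := by
  have hh : (0:ℝ) < Real.pi / n := by positivity
  rw [Int.floor_eq_iff]
  constructor
  · rw [le_div_iff₀ hh]; linarith
  · push_cast
    rw [div_lt_iff₀ hh]; linarith


lemma step_intervalIntegrable (n : ℕ) (Ψ : ℤ → ℝ) (B : ℝ) (hB : ∀ m, |Ψ m| ≤ B)
    (a b : ℝ) : IntervalIntegrable (fun u => Ψ ⌊u / (Real.pi / n)⌋) volume a b := by
  have hm : Measurable (fun u : ℝ => Ψ ⌊u / (Real.pi / n)⌋) :=
    (measurable_from_top (f := Ψ)).comp (Int.measurable_floor.comp (measurable_id.div_const _))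
  rw [intervalIntegrable_iff]
  apply Measure.integrableOn_of_bounded
  · exact (measure_Ioc_lt_top).ne
  · exact hm.aestronglyMeasurable
  · exact ae_of_all _ fun u => by simpa using hB _


lemma step_integral (n : ℕ) (hn : 0 < n) (Ψ : ℤ → ℝ) (m : ℤ) (c d : ℝ)
    (h1 : (m : ℝ) * (Real.pi / n) ≤ c) (h2 : c ≤ d)
    (h3 : d ≤ (m + 1 : ℝ) * (Real.pi / n)) :
    ∫ u in c..d, Ψ ⌊u / (Real.pi / n)⌋ = (d - c) * Ψ m := by
  have hd : ∀ᵐ u : ℝ, u ≠ d := by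
    rw [ae_iff]
    simpa using measure_singleton (d : ℝ)
  have : ∫ u in c..d, Ψ ⌊u / (Real.pi / n)⌋ = ∫ _ in c..d, Ψ m := by
    apply intervalIntegral.integral_congr_ae
    filter_upwards [hd] with u hu hmem
    rw [Set.uIoc_of_le h2] at hmem
    have h4 : u < d := lt_of_le_of_ne hmem.2 hu
    congr 1
    exact floor_cell hn (le_trans h1 hmem.1.le) (lt_of_lt_of_le h4 h3)
  rw [this]
  simp [mul_comm]


lemma cos_sum (n : ℕ) (hn : 0 < n) (p : ℤ) (hp : ¬ ((2 * (n:ℤ)) ∣ p)) :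
    ∑ m ∈ Finset.range n, Real.cos (m * ((p : ℝ) * Real.pi / n)) =
      if Odd p then 1 else 0 := by
  set θ : ℝ := (p : ℝ) * Real.pi / n with hθ
  set w : ℂ := Complex.exp (θ * Complex.I) with hw
  have hw1 : w ≠ 1 := by
    intro h
    rw [hw, Complex.exp_eq_one_iff] at h
    obtain ⟨k, hk⟩ := h
    apply hp
    refine ⟨k, ?_⟩
    have him : θ = (k : ℝ) * (2 * Real.pi) := by
      have h := congrArg Complex.im hk
      simpa using h
    rw [hθ] at him
    have hπ := Real.pi_ne_zero
    have hn0 : (n:ℝ) ≠ 0 := Nat.cast_ne_zero.mpr hn.ne'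
    field_simp at him
    have h2 : (p : ℝ) = 2 * n * k := by
      apply mul_right_cancel₀ hπ
      linear_combination π * him
    exact_mod_cast h2
  have hwn : w ^ n = (-1 : ℂ) ^ p := by
    rw [hw, ← Complex.exp_nat_mul]
    have : (n : ℂ) * (θ * Complex.I) = p * (Real.pi * Complex.I) := by
      rw [hθ]
      have hn0 : ((n:ℂ)) ≠ 0 := by exact_mod_cast Nat.cast_ne_zero.mpr hn.ne'
      push_cast
      field_simp
    rw [this, Complex.exp_int_mul, Complex.exp_pi_mul_I]
  have hgeom : ∑ m ∈ Finset.range n, w ^ m = (w ^ n - 1) / (w - 1) := geom_sum_eq hw1 n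
  have hre : ∑ m ∈ Finset.range n, Real.cos (m * θ) = ((w ^ n - 1) / (w - 1)).re := by
    rw [← hgeom, Complex.re_sum]
    congr 1
    ext m
    rw [hw, ← Complex.exp_nat_mul]
    have : (m : ℂ) * (θ * Complex.I) = ((m * θ : ℝ) : ℂ) * Complex.I := by push_cast; ring
    rw [this, Complex.exp_ofReal_mul_I_re]
  have hwre : w.re = Real.cos θ ∧ w.im = Real.sin θ := by
    constructor
    · rw [hw]; exact Complex.exp_ofReal_mul_I_re θ
    · rw [hw]; exact Complex.exp_ofReal_mul_I_im θ
  rcases Int.even_or_odd p with he | ho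
  · have : (-1 : ℂ) ^ p = 1 := he.neg_one_zpow
    rw [hre, hwn, this]
    simp [Int.not_odd_iff_even.mpr he]
  · have hne : (-1 : ℂ) ^ p = -1 := ho.neg_one_zpow
    have hcos : Real.cos θ ≠ 1 := by
      intro hc
      apply hw1
      have hsin : Real.sin θ = 0 := by
        have := Real.sin_sq_add_cos_sq θ
        nlinarith
      apply Complex.ext
      · rw [hwre.1, hc]; rfl
      · rw [hwre.2, hsin]; rfl
    rw [hre, hwn, hne, if_pos ho]
    rw [Complex.div_re]
    have h1 : (-1 - 1 : ℂ).re = -2 := by norm_num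
    have h2 : (-1 - 1 : ℂ).im = 0 := by norm_num
    have h3 : (w - 1).re = Real.cos θ - 1 := by rw [Complex.sub_re, hwre.1]; norm_num
    have h4 : (w - 1).im = Real.sin θ := by rw [Complex.sub_im, hwre.2]; norm_num
    have h5 : Complex.normSq (w - 1) = 2 - 2 * Real.cos θ := by
      rw [Complex.normSq_apply, h3, h4]
      have := Real.sin_sq_add_cos_sq θ
      nlinarith
    rw [h1, h2, h3, h4, h5]
    have h6 : 2 - 2 * Real.cos θ ≠ 0 := by
      intro hc; apply hcos; linarith
    field_simp
    ring


lemma phi_abs_le (j : ℕ) (x : ℝ) : |phi j x| ≤ Real.sqrt (2 / Real.pi) := by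
  rw [phi, abs_mul, abs_of_nonneg (Real.sqrt_nonneg _)]
  nlinarith [abs_sin_le_one ((j:ℝ) * x), Real.sqrt_nonneg (2 / Real.pi), abs_nonneg (Real.sin ((j:ℝ)*x))]


lemma sinsin_sum (n j k : ℕ) (hn : 2 ≤ n) (hj1 : 1 ≤ j) (hj2 : j ≤ n - 1)
    (hk1 : 1 ≤ k) (hk2 : k ≤ n - 1) :
    ∑ m ∈ Finset.range n, Real.sin ((j:ℝ) * ((Real.pi / n) * m)) * Real.sin ((k:ℝ) * ((Real.pi / n) * m))
      = if j = k then (n : ℝ) / 2 else 0 := by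
  have hn0 : 0 < n := by omega
  have hn0' : (n:ℝ) ≠ 0 := Nat.cast_ne_zero.mpr hn0.ne'
  set p : ℤ := (j : ℤ) - k with hp
  set q : ℤ := (j : ℤ) + k with hq
  have hsum : ∀ m : ℕ, Real.sin ((j:ℝ) * ((Real.pi / n) * m)) * Real.sin ((k:ℝ) * ((Real.pi / n) * m))
      = (Real.cos (m * ((p : ℝ) * Real.pi / n)) - Real.cos (m * ((q : ℝ) * Real.pi / n))) / 2 := by
    intro m
    have h2 := Real.two_mul_sin_mul_sin ((j:ℝ) * ((Real.pi / n) * m)) ((k:ℝ) * ((Real.pi / n) * m))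
    have e1 : (j:ℝ) * ((Real.pi / n) * m) - (k:ℝ) * ((Real.pi / n) * m) = m * ((p : ℝ) * Real.pi / n) := by
      rw [hp]; push_cast; field_simp
    have e2 : (j:ℝ) * ((Real.pi / n) * m) + (k:ℝ) * ((Real.pi / n) * m) = m * ((q : ℝ) * Real.pi / n) := by
      rw [hq]; push_cast; field_simp
    rw [e1, e2] at h2
    linarith
  have hjZ : (1:ℤ) ≤ (j:ℤ) ∧ (j:ℤ) ≤ (n:ℤ) - 1 := by
    constructor <;> [exact_mod_cast hj1; omega]
  have hkZ : (1:ℤ) ≤ (k:ℤ) ∧ (k:ℤ) ≤ (n:ℤ) - 1 := by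
    constructor <;> [exact_mod_cast hk1; omega]
  rw [Finset.sum_congr rfl (fun m _ => hsum m)]
  rw [← Finset.sum_div, Finset.sum_sub_distrib]
  have hqsum : ∑ m ∈ Finset.range n, Real.cos (m * ((q : ℝ) * Real.pi / n)) = if Odd q then 1 else 0 := by
    apply cos_sum n hn0
    intro hdvd
    have h1 : 0 < q := by rw [hq]; omega
    have hle := Int.le_of_dvd h1 hdvd
    omega
  by_cases hjk : j = k
  · have hp0 : p = 0 := by rw [hp, hjk]; ring
    have hpsum : ∑ m ∈ Finset.range n, Real.cos (m * ((p : ℝ) * Real.pi / n)) = n := by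
      rw [hp0]
      simp
    have hqe : ¬ Odd q := by
      have h2 : q = 2 * (k:ℤ) := by rw [hq, hjk]; ring
      rw [h2]
      exact Int.not_odd_iff_even.mpr (even_two_mul _)
    rw [hpsum, hqsum, if_neg hqe, if_pos hjk]
    ring
  · have hpne : ¬ ((2 * (n:ℤ)) ∣ p) := by
      intro hdvd
      have hne : (j:ℤ) ≠ (k:ℤ) := fun h => hjk (by exact_mod_cast h)
      have h3 : p ≠ 0 := by rw [hp]; omega
      have hle := Int.le_of_dvd (abs_pos.mpr h3) ((dvd_abs _ _).mpr hdvd)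
      have hb : |p| < 2 * (n:ℤ) := by
        rcases abs_cases p with ⟨he, _⟩ | ⟨he, _⟩ <;> rw [he, hp] <;> omega
      omega
    have hpsum := cos_sum n hn0 p hpne
    have hqp : q = p + 2 * (k:ℤ) := by rw [hp, hq]; ring
    have hpar : Odd p ↔ Odd q := by
      rw [hqp]
      simp [Int.odd_add]
    rw [hpsum, hqsum, if_neg hjk]
    by_cases hop : Odd p
    · rw [if_pos hop, if_pos (hpar.mp hop)]; ring
    · rw [if_neg hop, if_neg (fun h => hop (hpar.mpr h))]; ring


lemma ortho (n j k : ℕ) (hn : 2 ≤ n) (hj1 : 1 ≤ j) (hj2 : j ≤ n - 1)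
    (hk1 : 1 ≤ k) (hk2 : k ≤ n - 1) :
    ∫ z in (0:ℝ)..Real.pi, phi j (kappa n z) * phi k (kappa n z)
      = if j = k then 1 else 0 := by
  have hn0 : 0 < n := by omega
  have hn0' : (n:ℝ) ≠ 0 := Nat.cast_ne_zero.mpr hn0.ne'
  set Ψ : ℤ → ℝ := fun m => phi j ((Real.pi / n) * m) * phi k ((Real.pi / n) * m) with hΨ
  have hfun : ∀ z : ℝ, phi j (kappa n z) * phi k (kappa n z) = Ψ ⌊z / (Real.pi / n)⌋ := by
    intro z; rw [hΨ, kappa]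
  have hB : ∀ m : ℤ, |Ψ m| ≤ Real.sqrt (2/Real.pi) * Real.sqrt (2/Real.pi) := by
    intro m
    rw [hΨ]
    simp only
    rw [abs_mul]
    exact mul_le_mul (phi_abs_le _ _) (phi_abs_le _ _) (abs_nonneg _) (Real.sqrt_nonneg _)
  have key : ∫ z in (0:ℝ)..Real.pi, Ψ ⌊z / (Real.pi / n)⌋
      = ∑ m ∈ Finset.range n, (Real.pi / n) * Ψ (m : ℤ) := by
    have hsplit := intervalIntegral.sum_integral_adjacent_intervals
      (a := fun m : ℕ => (m : ℝ) * (Real.pi / n)) (n := n)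
      (μ := volume) (f := fun u => Ψ ⌊u / (Real.pi / n)⌋)
      (fun i _ => step_intervalIntegrable n Ψ _ hB _ _)
    beta_reduce at hsplit
    rw [show ((0:ℕ):ℝ) * (Real.pi/(n:ℝ)) = 0 by simp,
        show ((n:ℕ):ℝ) * (Real.pi/(n:ℝ)) = Real.pi by field_simp] at hsplit
    rw [← hsplit]
    apply Finset.sum_congr rfl
    intro m _
    have hstep := step_integral n hn0 Ψ (m : ℤ) ((m:ℝ)*(Real.pi/n)) (((m:ℕ)+1:ℝ)*(Real.pi/n))
      (by push_cast; ring_nf; exact le_refl _)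
      (by
        have hp : (0:ℝ) ≤ Real.pi / n := by positivity
        nlinarith)
      (by push_cast; ring_nf; exact le_refl _)
    push_cast at hstep ⊢
    rw [hstep]
    ring
  have h2 : Real.sqrt (2/Real.pi) * Real.sqrt (2/Real.pi) = 2/Real.pi :=
    Real.mul_self_sqrt (by positivity)
  have hΨval : ∀ m : ℕ, (Real.pi / n) * Ψ (m : ℤ)
      = (2 / n) * (Real.sin ((j:ℝ) * ((Real.pi / n) * m)) * Real.sin ((k:ℝ) * ((Real.pi / n) * m))) := by
    intro m
    rw [hΨ]
    simp only [Int.cast_natCast]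
    rw [phi, phi]
    rw [show (Real.sqrt (2/Real.pi) * Real.sin ((j:ℝ) * ((Real.pi / n) * m)))
        * (Real.sqrt (2/Real.pi) * Real.sin ((k:ℝ) * ((Real.pi / n) * m)))
        = (Real.sqrt (2/Real.pi) * Real.sqrt (2/Real.pi))
          * (Real.sin ((j:ℝ) * ((Real.pi / n) * m)) * Real.sin ((k:ℝ) * ((Real.pi / n) * m))) from by ring,
      h2]
    have hπ := Real.pi_ne_zero
    field_simp
  simp only [hfun]
  rw [key, Finset.sum_congr rfl (fun m _ => hΨval m), ← Finset.mul_sum,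
    sinsin_sum n j k hn hj1 hj2 hk1 hk2]
  by_cases hjk : j = k
  · rw [if_pos hjk, if_pos hjk]
    field_simp
  · rw [if_neg hjk, if_neg hjk, mul_zero]


noncomputable def Psig (n j : ℕ) : ℤ → ℝ := fun m =>
  ((n:ℝ)/Real.pi) * (phi j ((Real.pi/n)*m + Real.pi/n) - phi j ((Real.pi/n)*m))


lemma sin_lip (a b : ℝ) : |Real.sin a - Real.sin b| ≤ |a - b| := by
  rw [Real.sin_sub_sin, abs_mul, abs_mul]
  have h1 : |Real.sin ((a-b)/2)| ≤ |a-b|/2 := by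
    calc |Real.sin ((a-b)/2)| ≤ |(a-b)/2| := Real.abs_sin_le_abs
      _ = |a-b|/2 := by rw [abs_div]; norm_num
  have h2 : |Real.cos ((a+b)/2)| ≤ 1 := Real.abs_cos_le_one _
  have h3 : |(2:ℝ)| = 2 := by norm_num
  rw [h3]
  nlinarith [abs_nonneg (Real.sin ((a-b)/2)), abs_nonneg (Real.cos ((a+b)/2)), abs_nonneg (a-b)]


lemma Psig_bound (n j : ℕ) (hn : 0 < n) :
    ∀ m : ℤ, |Psig n j m| ≤ Real.sqrt (2/Real.pi) * j := by
  intro m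
  have hn0' : (n:ℝ) ≠ 0 := Nat.cast_ne_zero.mpr hn.ne'
  have hπ := Real.pi_pos
  set a := (Real.pi/(n:ℝ))*m with ha
  have hs : |Real.sin ((j:ℝ)*(a + Real.pi/n)) - Real.sin ((j:ℝ)*a)| ≤ (j:ℝ)*(Real.pi/n) := by
    have h := sin_lip ((j:ℝ)*(a + Real.pi/n)) ((j:ℝ)*a)
    have he : (j:ℝ)*(a + Real.pi/n) - (j:ℝ)*a = (j:ℝ)*(Real.pi/n) := by ring
    rw [he, abs_of_nonneg (by positivity : (0:ℝ) ≤ (j:ℝ)*(Real.pi/n))] at h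
    exact h
  have hrw : Psig n j m = ((n:ℝ)/Real.pi) * Real.sqrt (2/Real.pi)
      * (Real.sin ((j:ℝ)*(a + Real.pi/n)) - Real.sin ((j:ℝ)*a)) := by
    rw [Psig, phi, phi, ha]; ring
  rw [hrw, abs_mul, abs_of_nonneg (by positivity : (0:ℝ) ≤ ((n:ℝ)/Real.pi) * Real.sqrt (2/Real.pi))]
  calc ((n:ℝ)/Real.pi) * Real.sqrt (2/Real.pi) * |Real.sin ((j:ℝ)*(a + Real.pi/n)) - Real.sin ((j:ℝ)*a)|
      ≤ ((n:ℝ)/Real.pi) * Real.sqrt (2/Real.pi) * ((j:ℝ)*(Real.pi/n)) := by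
        apply mul_le_mul_of_nonneg_left hs (by positivity)
    _ = Real.sqrt (2/Real.pi) * j := by field_simp


lemma rep_grid (n j : ℕ) (hn : 0 < n) (k : ℕ) :
    ∫ u in (0:ℝ)..((k:ℝ)*(Real.pi/n)), Psig n j ⌊u/(Real.pi/n)⌋
      = phi j ((k:ℝ)*(Real.pi/n)) - phi j 0 := by
  have hn0' : (n:ℝ) ≠ 0 := Nat.cast_ne_zero.mpr hn.ne'
  induction k with
  | zero => simp
  | succ k ih =>
    have hint : ∀ a b : ℝ, IntervalIntegrable (fun u => Psig n j ⌊u/(Real.pi/n)⌋) volume a b :=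
      fun a b => step_intervalIntegrable n (Psig n j) _ (Psig_bound n j hn) a b
    have hadd := intervalIntegral.integral_add_adjacent_intervals
      (a := (0:ℝ)) (b := (k:ℝ)*(Real.pi/n)) (c := ((k+1:ℕ):ℝ)*(Real.pi/n))
      (f := fun u => Psig n j ⌊u/(Real.pi/n)⌋) (hint _ _) (hint _ _)
    rw [← hadd, ih]
    have hstep := step_integral n hn (Psig n j) (k : ℤ) ((k:ℝ)*(Real.pi/n)) (((k+1:ℕ):ℝ)*(Real.pi/n))
      (by push_cast; ring_nf; exact le_refl _)
      (by
        have hp : (0:ℝ) ≤ Real.pi / n := by positivity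
        push_cast
        nlinarith)
      (by push_cast; ring_nf; exact le_refl _)
    rw [hstep, Psig]
    push_cast
    have e1 : Real.pi/(n:ℝ) * (k:ℝ) + Real.pi/n = ((k:ℝ)+1)*(Real.pi/n) := by ring
    have e2 : Real.pi/(n:ℝ) * (k:ℝ) = (k:ℝ)*(Real.pi/n) := by ring
    rw [e1, e2]
    field_simp
    ring


lemma rep (n j : ℕ) (hn : 0 < n) (x : ℝ) (hx : 0 ≤ x) :
    phiI n j x = phi j 0 + ∫ u in (0:ℝ)..x, Psig n j ⌊u/(Real.pi/n)⌋ := by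
  have hn0' : (n:ℝ) ≠ 0 := Nat.cast_ne_zero.mpr hn.ne'
  have hπ := Real.pi_pos
  have hh : (0:ℝ) < Real.pi/n := by positivity
  have hint : ∀ a b : ℝ, IntervalIntegrable (fun u => Psig n j ⌊u/(Real.pi/n)⌋) volume a b :=
    fun a b => step_intervalIntegrable n (Psig n j) _ (Psig_bound n j hn) a b
  set K : ℤ := ⌊x/(Real.pi/n)⌋ with hK
  have hK0 : 0 ≤ K := Int.floor_nonneg.mpr (div_nonneg hx hh.le)
  have hKle : (K:ℝ)*(Real.pi/n) ≤ x := by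
    have h := Int.floor_le (x/(Real.pi/n))
    rw [← hK] at h
    calc (K:ℝ)*(Real.pi/n) ≤ (x/(Real.pi/n))*(Real.pi/n) := by
          apply mul_le_mul_of_nonneg_right h hh.le
      _ = x := by field_simp
  have hKlt : x < ((K:ℝ)+1)*(Real.pi/n) := by
    have h := Int.lt_floor_add_one (x/(Real.pi/n))
    rw [← hK] at h
    calc x = (x/(Real.pi/n))*(Real.pi/n) := by field_simp
      _ < ((K:ℝ)+1)*(Real.pi/n) := by
          apply mul_lt_mul_of_pos_right (by exact_mod_cast h) hh
  have hgrid := rep_grid n j hn K.toNat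
  rw [show ((K.toNat:ℕ):ℝ) = (K:ℝ) by exact_mod_cast congrArg Int.cast (Int.toNat_of_nonneg hK0)] at hgrid
  have hsplit := intervalIntegral.integral_add_adjacent_intervals
    (a := (0:ℝ)) (b := (K:ℝ)*(Real.pi/n)) (c := x)
    (f := fun u => Psig n j ⌊u/(Real.pi/n)⌋) (hint _ _) (hint _ _)
  have hstep := step_integral n hn (Psig n j) K ((K:ℝ)*(Real.pi/n)) x (le_refl _) hKle (by push_cast; linarith)
  have hco : (n:ℝ)*x/Real.pi - (K:ℝ) = (x - (K:ℝ)*(Real.pi/n))*((n:ℝ)/Real.pi) := by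
    field_simp
  rw [phiI, kappa, ← hK, hco, ← hsplit, hgrid, hstep, Psig]
  have e2 : Real.pi/(n:ℝ) * (K:ℝ) = (K:ℝ)*(Real.pi/n) := by ring
  rw [e2]
  ring


lemma phiI_lip (n j : ℕ) (hn : 0 < n) (x y : ℝ) (hx : 0 ≤ x) (hy : 0 ≤ y) :
    |phiI n j x - phiI n j y| ≤ Real.sqrt (2/Real.pi) * j * |x - y| := by
  have hint : ∀ a b : ℝ, IntervalIntegrable (fun u => Psig n j ⌊u/(Real.pi/n)⌋) volume a b :=
    fun a b => step_intervalIntegrable n (Psig n j) _ (Psig_bound n j hn) a b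
  rw [rep n j hn x hx, rep n j hn y hy]
  have hsplit := intervalIntegral.integral_add_adjacent_intervals
    (a := (0:ℝ)) (b := y) (c := x)
    (f := fun u => Psig n j ⌊u/(Real.pi/n)⌋) (hint _ _) (hint _ _)
  have he : (phi j 0 + ∫ u in (0:ℝ)..x, Psig n j ⌊u/(Real.pi/n)⌋)
      - (phi j 0 + ∫ u in (0:ℝ)..y, Psig n j ⌊u/(Real.pi/n)⌋)
      = ∫ u in y..x, Psig n j ⌊u/(Real.pi/n)⌋ := by linarith
  rw [he]
  have hb := intervalIntegral.norm_integral_le_of_norm_le_const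
    (C := Real.sqrt (2/Real.pi) * j) (f := fun u => Psig n j ⌊u/(Real.pi/n)⌋)
    (a := y) (b := x) (fun u _ => by simpa using Psig_bound n j hn _)
  rw [Real.norm_eq_abs] at hb
  calc |∫ u in y..x, Psig n j ⌊u/(Real.pi/n)⌋| ≤ Real.sqrt (2/Real.pi) * j * |x - y| := hb
    _ ≤ Real.sqrt (2/Real.pi) * j * |x - y| := le_refl _


lemma sq_sum_integral (n : ℕ) (hn : 2 ≤ n) (A : ℕ → ℝ) :
    ∫ z in (0:ℝ)..Real.pi, (∑ j ∈ Finset.Icc 1 (n-1), A j * phi j (kappa n z))^2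
      = ∑ j ∈ Finset.Icc 1 (n-1), (A j)^2 := by
  have hn0 : 0 < n := by omega
  have hn0' : (n:ℝ) ≠ 0 := Nat.cast_ne_zero.mpr hn0.ne'
  have hii : ∀ (c : ℝ) (j k : ℕ),
      IntervalIntegrable (fun z => c * (phi j (kappa n z) * phi k (kappa n z))) volume 0 Real.pi := by
    intro c j k
    have he : (fun z => c * (phi j (kappa n z) * phi k (kappa n z)))
        = fun z => (fun m : ℤ => c * (phi j ((Real.pi/n)*m) * phi k ((Real.pi/n)*m))) ⌊z/(Real.pi/n)⌋ := by
      funext z; rw [kappa]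
    rw [he]
    exact step_intervalIntegrable n (fun m : ℤ => c * (phi j ((Real.pi/n)*m) * phi k ((Real.pi/n)*m)))
      (|c| * (Real.sqrt (2/Real.pi)*Real.sqrt (2/Real.pi)))
      (fun m => by
        rw [abs_mul, abs_mul]
        exact mul_le_mul_of_nonneg_left
          (mul_le_mul (phi_abs_le _ _) (phi_abs_le _ _) (abs_nonneg _) (Real.sqrt_nonneg _))
          (abs_nonneg c)) 0 Real.pi
  have hsq : ∀ z:ℝ, (∑ j ∈ Finset.Icc 1 (n-1), A j * phi j (kappa n z))^2
      = ∑ j ∈ Finset.Icc 1 (n-1), ∑ k ∈ Finset.Icc 1 (n-1),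
          (A j * A k) * (phi j (kappa n z) * phi k (kappa n z)) := by
    intro z
    rw [sq, Finset.sum_mul_sum]
    apply Finset.sum_congr rfl; intro j _
    apply Finset.sum_congr rfl; intro k _
    ring
  simp only [hsq]
  have hint2 : ∀ j : ℕ, IntervalIntegrable
      (fun z => ∑ k ∈ Finset.Icc 1 (n-1), A j * A k * (phi j (kappa n z) * phi k (kappa n z)))
      volume 0 Real.pi := by
    intro j
    have h := IntervalIntegrable.sum (μ := volume) (a := 0) (b := Real.pi) (Finset.Icc 1 (n-1))
      (f := fun k => fun z => A j * A k * (phi j (kappa n z) * phi k (kappa n z)))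
      (fun k _ => hii (A j * A k) j k)
    have he : (∑ k ∈ Finset.Icc 1 (n-1), fun z => A j * A k * (phi j (kappa n z) * phi k (kappa n z)))
        = fun z => ∑ k ∈ Finset.Icc 1 (n-1), A j * A k * (phi j (kappa n z) * phi k (kappa n z)) := by
      funext z
      simp [Finset.sum_apply]
    rwa [he] at h
  rw [intervalIntegral.integral_finset_sum (fun j _ => hint2 j)]
  have hjj : ∀ j ∈ Finset.Icc 1 (n-1),
      (∫ z in (0:ℝ)..Real.pi, ∑ k ∈ Finset.Icc 1 (n-1),
        (A j * A k) * (phi j (kappa n z) * phi k (kappa n z))) = (A j)^2 := by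
    intro j hj
    rw [intervalIntegral.integral_finset_sum (fun k _ => hii (A j * A k) j k)]
    rw [Finset.mem_Icc] at hj
    have hkk : ∀ k ∈ Finset.Icc 1 (n-1),
        (∫ z in (0:ℝ)..Real.pi, (A j * A k) * (phi j (kappa n z) * phi k (kappa n z)))
          = if j = k then (A j * A k) else 0 := by
      intro k hk
      rw [Finset.mem_Icc] at hk
      rw [intervalIntegral.integral_const_mul, ortho n j k hn hj.1 hj.2 hk.1 hk.2]
      by_cases hjk : j = k
      · rw [if_pos hjk, if_pos hjk, mul_one]
      · rw [if_neg hjk, if_neg hjk, mul_zero]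
    rw [Finset.sum_congr rfl hkk, Finset.sum_ite_eq (Finset.Icc 1 (n-1)) j (fun k => A j * A k),
      if_pos (Finset.mem_Icc.mpr hj), sq]
  rw [Finset.sum_congr rfl hjj]


lemma lam_sq_ge (n j : ℕ) (hn : 2 ≤ n) (hj1 : 1 ≤ j) (hjn : j ≤ n - 1) :
    (16 / Real.pi ^ 4) * (j:ℝ)^4 ≤ (lam n j)^2 := by
  have hπ := Real.pi_pos
  have hn0 : (0:ℝ) < n := by positivity
  have hj0 : (0:ℝ) < j := by exact_mod_cast (by omega : 0 < j)
  have hjn' : (j:ℝ) ≤ n := by exact_mod_cast (by omega : j ≤ n)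
  set θ := (j:ℝ) * Real.pi / (2*(n:ℝ)) with hθ
  have hθ0 : 0 < θ := by rw [hθ]; positivity
  have hθle : θ ≤ Real.pi/2 := by
    rw [hθ, div_le_div_iff₀ (by positivity) (by norm_num)]
    nlinarith
  have hsin := Real.mul_le_sin hθ0.le hθle
  have hc : (2/Real.pi)^2 ≤ Real.sin θ^2/θ^2 := by
    rw [le_div_iff₀ (by positivity : (0:ℝ) < θ^2)]
    have hp := pow_le_pow_left₀ (by positivity : (0:ℝ) ≤ 2/Real.pi*θ) hsin 2
    calc (2/Real.pi)^2*θ^2 = (2/Real.pi*θ)^2 := by ring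
      _ ≤ Real.sin θ^2 := hp
  have hlam : lam n j = -((j:ℝ)^2) * (Real.sin θ^2/θ^2) := by rw [lam, hθ]
  rw [hlam]
  have hcc : ((2/Real.pi)^2)^2 ≤ (Real.sin θ^2/θ^2)^2 :=
    pow_le_pow_left₀ (by positivity) hc 2
  have h4 : (16/Real.pi^4) = ((2/Real.pi)^2)^2 := by
    field_simp
    ring
  nlinarith [hcc, pow_pos hj0 4, pow_nonneg hj0.le 4]


lemma sum_inv_sq (N : ℕ) : ∑ j ∈ Finset.Icc 1 N, ((j:ℝ)^2)⁻¹ ≤ 2 := by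
  have key : ∀ M : ℕ, 1 ≤ M → ∑ j ∈ Finset.Icc 1 M, ((j:ℝ)^2)⁻¹ ≤ 2 - 1/(M:ℝ) := by
    intro M hM
    induction M, hM using Nat.le_induction with
    | base => norm_num
    | succ M hM ih =>
      rw [Finset.sum_Icc_succ_top (by omega : 1 ≤ M + 1)]
      have hM0 : (0:ℝ) < M := by exact_mod_cast hM
      have ha : (0:ℝ) < (M:ℝ)*((M:ℝ)+1) := by positivity
      have hb : (M:ℝ)*((M:ℝ)+1) ≤ ((M:ℝ)+1)^2 := by nlinarith
      have hc : (((M:ℝ)+1)^2)⁻¹ ≤ ((M:ℝ)*((M:ℝ)+1))⁻¹ := by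
        apply inv_anti₀ ha hb
      have hd : ((M:ℝ)*((M:ℝ)+1))⁻¹ = 1/(M:ℝ) - 1/((M:ℝ)+1) := by
        field_simp
        ring
      push_cast
      push_cast at ih
      linarith
  rcases Nat.eq_zero_or_pos N with h0 | hpos
  · subst h0; simp
  · have h := key N hpos
    have : (0:ℝ) < N := by exact_mod_cast hpos
    have h1 : (0:ℝ) ≤ 1/(N:ℝ) := by positivity
    linarith


lemma exp_int (b t : ℝ) (hb : 0 < b) :
    ∫ r in (0:ℝ)..t, Real.exp (-b*(t - r)) = (1 - Real.exp (-b*t))/b := by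
  have hF : ∀ r ∈ Set.uIcc (0:ℝ) t,
      HasDerivAt (fun r => Real.exp (-b*(t-r))/b) (Real.exp (-b*(t-r))) r := by
    intro r _
    have h1 : HasDerivAt (fun r : ℝ => -b*(t-r)) b r := by
      have h2 : (fun r : ℝ => -b*(t-r)) = fun r => b*r - b*t := by funext r; ring
      rw [h2]
      simpa using ((hasDerivAt_id r).const_mul b).sub_const (b*t)
    have h4 := (h1.exp).div_const b
    rw [mul_div_cancel_right₀ _ hb.ne'] at h4
    exact h4
  have hcont : IntervalIntegrable (fun r => Real.exp (-b*(t-r))) volume 0 t := by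
    apply Continuous.intervalIntegrable
    exact Real.continuous_exp.comp (by continuity)
  rw [intervalIntegral.integral_eq_sub_of_hasDerivAt hF hcont]
  rw [sub_self, mul_zero, sub_zero, Real.exp_zero]
  ring


/-- There exists `C = C(T) > 0` (independent of `n`) such that for every `n ≥ 2`,
`x, y ∈ [0,π]`, `t ∈ (0,T]`:
`∫_0^t ∫_0^π |G^n_{t−r}(x,z) − G^n_{t−r}(y,z)|² dz dr ≤ C|x−y|²`. -/
theorem stmt11 (T : ℝ) (hT : 0 < T) :
    ∃ C : ℝ, 0 < C ∧ ∀ n : ℕ, 2 ≤ n →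
      ∀ x ∈ Set.Icc (0 : ℝ) Real.pi, ∀ y ∈ Set.Icc (0 : ℝ) Real.pi,
      ∀ t ∈ Set.Ioc (0 : ℝ) T,
      (∫ r in (0 : ℝ)..t, ∫ z in (0 : ℝ)..Real.pi,
        |Gn n (t - r) x z - Gn n (t - r) y z| ^ 2) ≤ C * |x - y| ^ 2 := by
  have hπ := Real.pi_pos
  refine ⟨Real.pi^3/8, by positivity, ?_⟩
  intro n hn x hx y hy t ht
  have hn0 : 0 < n := by omega
  have hn0' : (n:ℝ) ≠ 0 := Nat.cast_ne_zero.mpr hn0.ne'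
  -- inner integral identity
  have inner : ∀ r : ℝ,
      (∫ z in (0:ℝ)..Real.pi, |Gn n (t-r) x z - Gn n (t-r) y z|^2)
        = ∑ j ∈ Finset.Icc 1 (n-1),
            (Real.exp (-(lam n j)^2*(t-r)) * (phiI n j x - phiI n j y))^2 := by
    intro r
    have hG : ∀ z : ℝ, Gn n (t-r) x z - Gn n (t-r) y z
        = ∑ j ∈ Finset.Icc 1 (n-1),
            (Real.exp (-(lam n j)^2*(t-r)) * (phiI n j x - phiI n j y)) * phi j (kappa n z) := by
      intro z
      rw [Gn, Gn, ← Finset.sum_sub_distrib]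
      apply Finset.sum_congr rfl
      intro j _
      ring
    simp only [hG, sq_abs]
    exact sq_sum_integral n hn (fun j => Real.exp (-(lam n j)^2*(t-r)) * (phiI n j x - phiI n j y))
  rw [intervalIntegral.integral_congr (g := fun r => ∑ j ∈ Finset.Icc 1 (n-1),
      (Real.exp (-(lam n j)^2*(t-r)) * (phiI n j x - phiI n j y))^2) (fun r _ => inner r)]
  have hcont : ∀ j : ℕ, IntervalIntegrable
      (fun r => (Real.exp (-(lam n j)^2*(t-r)) * (phiI n j x - phiI n j y))^2) volume 0 t := by
    intro j
    apply Continuous.intervalIntegrable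
    apply Continuous.pow
    exact (Real.continuous_exp.comp (by continuity)).mul continuous_const
  rw [intervalIntegral.integral_finset_sum (fun j _ => hcont j)]
  -- evaluate each time integral
  have hterm : ∀ j ∈ Finset.Icc 1 (n-1),
      (∫ r in (0:ℝ)..t, (Real.exp (-(lam n j)^2*(t-r)) * (phiI n j x - phiI n j y))^2)
        ≤ (Real.pi^3/16*|x - y|^2) * ((j:ℝ)^2)⁻¹ := by
    intro j hj
    rw [Finset.mem_Icc] at hj
    have hj0 : (0:ℝ) < j := by exact_mod_cast (by omega : 0 < j)
    have hlamge := lam_sq_ge n j hn hj.1 hj.2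
    have hlampos : 0 < (lam n j)^2 := by
      refine lt_of_lt_of_le ?_ hlamge
      have := pow_pos hj0 4
      positivity
    have hb : (0:ℝ) < 2*(lam n j)^2 := by linarith
    have hsq : ∀ r : ℝ, (Real.exp (-(lam n j)^2*(t-r)) * (phiI n j x - phiI n j y))^2
        = (phiI n j x - phiI n j y)^2 * Real.exp (-(2*(lam n j)^2)*(t-r)) := by
      intro r
      rw [mul_pow, ← Real.exp_nat_mul]
      have he : ((2:ℕ):ℝ) * (-(lam n j)^2*(t-r)) = -(2*(lam n j)^2)*(t-r) := by push_cast; ring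
      rw [he]
      ring
    simp only [hsq]
    rw [intervalIntegral.integral_const_mul, exp_int (2*(lam n j)^2) t hb]
    -- bounds
    have hΔle := phiI_lip n j hn0 x y hx.1 hy.1
    have hΔsq : (phiI n j x - phiI n j y)^2 ≤ (2/Real.pi)*(j:ℝ)^2*|x - y|^2 := by
      have h1 : (phiI n j x - phiI n j y)^2 ≤ (Real.sqrt (2/Real.pi)*j*|x - y|)^2 := by
        rw [← sq_abs (phiI n j x - phiI n j y)]
        exact pow_le_pow_left₀ (abs_nonneg _) hΔle 2
      calc (phiI n j x - phiI n j y)^2 ≤ (Real.sqrt (2/Real.pi)*j*|x - y|)^2 := h1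
        _ = (2/Real.pi)*(j:ℝ)^2*|x - y|^2 := by
            rw [mul_pow, mul_pow, Real.sq_sqrt (by positivity : (0:ℝ) ≤ 2/Real.pi)]
    have hexp : Real.exp (-(2*(lam n j)^2)*t) ≤ 1 := by
      rw [Real.exp_le_one_iff]
      nlinarith [ht.1.le]
    have hexp0 := Real.exp_pos (-(2*(lam n j)^2)*t)
    have hfrac : (1 - Real.exp (-(2*(lam n j)^2)*t))/(2*(lam n j)^2)
        ≤ Real.pi^4/(32*(j:ℝ)^4) := by
      have h32 : (0:ℝ) < 32*(j:ℝ)^4 := by positivity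
      rw [div_le_div_iff₀ hb h32]
      have hc : Real.pi^4 * ((16/Real.pi^4)*(j:ℝ)^4) = 16*(j:ℝ)^4 := by field_simp
      have hd := mul_le_mul_of_nonneg_left hlamge (by positivity : (0:ℝ) ≤ Real.pi^4)
      rw [hc] at hd
      nlinarith [hexp0, pow_pos hj0 4]
    have hfrac0 : 0 ≤ (1 - Real.exp (-(2*(lam n j)^2)*t))/(2*(lam n j)^2) :=
      div_nonneg (by linarith) hb.le
    calc (phiI n j x - phiI n j y)^2 * ((1 - Real.exp (-(2*(lam n j)^2)*t))/(2*(lam n j)^2))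
        ≤ ((2/Real.pi)*(j:ℝ)^2*|x - y|^2) * (Real.pi^4/(32*(j:ℝ)^4)) := by
          apply mul_le_mul hΔsq hfrac hfrac0 (by positivity)
      _ = (Real.pi^3/16*|x - y|^2) * ((j:ℝ)^2)⁻¹ := by
          field_simp
          ring
  calc ∑ j ∈ Finset.Icc 1 (n-1),
        (∫ r in (0:ℝ)..t, (Real.exp (-(lam n j)^2*(t-r)) * (phiI n j x - phiI n j y))^2)
      ≤ ∑ j ∈ Finset.Icc 1 (n-1), (Real.pi^3/16*|x - y|^2) * ((j:ℝ)^2)⁻¹ :=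
        Finset.sum_le_sum hterm
    _ = (Real.pi^3/16*|x - y|^2) * ∑ j ∈ Finset.Icc 1 (n-1), ((j:ℝ)^2)⁻¹ := by
        rw [Finset.mul_sum]
    _ ≤ (Real.pi^3/16*|x - y|^2) * 2 := by
        apply mul_le_mul_of_nonneg_left (sum_inv_sq (n-1)) (by positivity)
    _ = Real.pi^3/8 * |x - y|^2 := by ring
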